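/- Fix integers d ≥ 1 and n ≥ 1. For g > 0 and ρ ∈ ℝ define the weight of Y ∈ W_n as Q_{g,ρ,n}(Y) = (∏_{x∈range(Y)} F_{g,ρ}(n_x(Y))) / (Σ_{Y'∈W_n} ∏_{x∈range(Y')} F_{g,ρ}(n_x(Y'))). Suppose ρ = ρ(g) is chosen so that α(g,ρ(g)) = (ρ(g)−1)/(2√g) → +∞ as g → ∞. Then for every Y ∈ W_n, lim_{g→∞} Q_{g,ρ(g),n}(Y) = (1/c_n)·1_{Y ∈ S_n}; i.e. the limit is the uniform measure on n-step self-avoiding walks. -/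

import Mathlib

/-!
Formalization of statements from "The strong interaction limit of
continuous-time weakly self-avoiding walk" by Brydges, Dahlqvist, Slade.

An `n`-step nearest-neighbour walk on `ℤ^d` starting at the origin is encoded
bijectively by its sequence of steps `s : Fin n → Fin d × Bool`, a step being a
coordinate direction together with a sign.
-/

open scoped BigOperators Topology
open Filter

namespace StrongInteraction

/-- The unit step in coordinate direction `e.1`, with sign `e.2`. -/
def stepVec (d : ℕ) (e : Fin d × Bool) : Fin d → ℤ :=
  fun i => if i = e.1 then (if e.2 then 1 else -1) else 0

/-- `walkPos s k` is the position `Y_k` of the walk started at the origin whose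
successive nearest-neighbour steps are given by `s`. -/
def walkPos {d n : ℕ} (s : Fin n → Fin d × Bool) (k : Fin (n + 1)) : Fin d → ℤ :=
  ∑ i ∈ Finset.univ.filter (fun i : Fin n => (i : ℕ) < (k : ℕ)), stepVec d (s i)

/-- `n_x(Y)`: the number of visits to `x` by the walk. -/
def visits {d n : ℕ} (s : Fin n → Fin d × Bool) (x : Fin d → ℤ) : ℕ :=
  (Finset.univ.filter (fun k : Fin (n + 1) => walkPos s k = x)).card

/-- The set of distinct vertices visited by the walk. -/
def walkRange {d n : ℕ} (s : Fin n → Fin d × Bool) : Finset (Fin d → ℤ) :=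
  Finset.image (walkPos s) Finset.univ

/-- A walk is self-avoiding when its positions are pairwise distinct. -/
def SelfAvoiding {d n : ℕ} (s : Fin n → Fin d × Bool) : Prop :=
  Function.Injective (walkPos s)

instance {d n : ℕ} (s : Fin n → Fin d × Bool) : Decidable (SelfAvoiding s) :=
  inferInstanceAs (Decidable (Function.Injective (walkPos s)))

/-- `c_n`: the number of `n`-step self-avoiding walks. -/
def csaw (d n : ℕ) : ℕ :=
  (Finset.univ.filter fun s : Fin n → Fin d × Bool => SelfAvoiding s).card


/-- `F_{g,ρ}(m) = ∫_0^∞ (s^{m-1}/(m-1)!) e^{-s - g s² + ρ s} ds`, the contribution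
of a vertex visited `m` times, obtained from the Gamma(m,1) density of the sum of
`m` independent Exp(1) holding times. -/
noncomputable def F (g ρ : ℝ) (m : ℕ) : ℝ :=
  ∫ t in Set.Ioi (0 : ℝ),
    (t ^ (m - 1) / (Nat.factorial (m - 1))) * Real.exp (-t - g * t ^ 2 + ρ * t)

/-- The quick-step probability weight `Q_{g,ρ,n}(Y)` of a walk. -/
noncomputable def Qweight (d n : ℕ) (g ρ : ℝ) (s : Fin n → Fin d × Bool) : ℝ :=
  (∏ x ∈ walkRange s, F g ρ (visits s x)) /
    ∑ s' : Fin n → Fin d × Bool, ∏ x ∈ walkRange s', F g ρ (visits s' x)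


open MeasureTheory Real
open scoped Nat

lemma sum_visits {d n : ℕ} (s : Fin n → Fin d × Bool) :
    ∑ x ∈ walkRange s, visits s x = n + 1 := by
  have := Finset.card_eq_sum_card_image (walkPos s) (Finset.univ : Finset (Fin (n+1)))
  simp only [Finset.card_univ, Fintype.card_fin] at this
  rw [walkRange]; exact this.symm

lemma visits_pos {d n : ℕ} (s : Fin n → Fin d × Bool) {x : Fin d → ℤ}
    (hx : x ∈ walkRange s) : 1 ≤ visits s x := by
  rw [walkRange, Finset.mem_image] at hx
  obtain ⟨k, -, hk⟩ := hx
  refine Finset.card_pos.2 ⟨k, ?_⟩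
  simp [visits, hk]

lemma visits_eq_one {d n : ℕ} {s : Fin n → Fin d × Bool} (hs : SelfAvoiding s)
    {x : Fin d → ℤ} (hx : x ∈ walkRange s) : visits s x = 1 := by
  rw [walkRange, Finset.mem_image] at hx
  obtain ⟨k, -, hk⟩ := hx
  rw [visits, Finset.card_eq_one]
  refine ⟨k, ?_⟩
  ext l
  simp only [Finset.mem_filter, Finset.mem_univ, true_and, Finset.mem_singleton]
  constructor
  · intro h; exact hs (h.trans hk.symm)
  · rintro rfl; exact hk

lemma exists_two_le_visits {d n : ℕ} {s : Fin n → Fin d × Bool} (hs : ¬ SelfAvoiding s) :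
    ∃ x ∈ walkRange s, 2 ≤ visits s x := by
  rw [SelfAvoiding, Function.not_injective_iff] at hs
  obtain ⟨k, l, hkl, hne⟩ := hs
  refine ⟨walkPos s k, Finset.mem_image_of_mem _ (Finset.mem_univ k), ?_⟩
  have hsub : ({k, l} : Finset (Fin (n+1))) ⊆
      Finset.univ.filter (fun j => walkPos s j = walkPos s k) := by
    intro j hj
    simp only [Finset.mem_insert, Finset.mem_singleton] at hj
    rcases hj with rfl | rfl <;> simp [hkl]
  calc 2 = ({k, l} : Finset (Fin (n+1))).card := by
        rw [Finset.card_insert_of_notMem (by simpa using hne), Finset.card_singleton]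
  _ ≤ _ := Finset.card_le_card hsub

lemma card_filter_val_lt (n : ℕ) (k : Fin (n+1)) :
    (Finset.univ.filter (fun i : Fin n => (i : ℕ) < (k : ℕ))).card = (k : ℕ) := by
  have : (Finset.univ.filter (fun i : Fin n => (i : ℕ) < (k : ℕ))).card
      = (Finset.range (k : ℕ)).card := by
    refine Finset.card_bij (fun i _ => (i : ℕ)) ?_ ?_ ?_
    · intro i hi; simp only [Finset.mem_filter] at hi; exact Finset.mem_range.2 hi.2
    · intro i _ j _ h; exact Fin.ext h
    · intro j hj
      have hj2 := Finset.mem_range.1 hj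
      have hjn : j < n := lt_of_lt_of_le hj2 (Nat.lt_succ_iff.1 k.isLt)
      exact ⟨⟨j, hjn⟩, Finset.mem_filter.2 ⟨Finset.mem_univ _, hj2⟩, rfl⟩
  rw [this, Finset.card_range]

lemma csaw_pos (d n : ℕ) (hd : 1 ≤ d) : 0 < csaw d n := by
  refine Finset.card_pos.2 ⟨fun _ => (⟨0, hd⟩, true), Finset.mem_filter.2 ⟨Finset.mem_univ _, ?_⟩⟩
  intro k l h
  have h0 := congrFun h ⟨0, hd⟩
  simp only [walkPos, Finset.sum_apply, stepVec, if_pos rfl, if_true,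
    Finset.sum_const, nsmul_eq_mul, mul_one, card_filter_val_lt] at h0
  exact Fin.ext (Nat.cast_injective h0)

lemma pow_le_factorial_mul_exp {y : ℝ} (hy : 0 ≤ y) (k : ℕ) :
    y ^ k ≤ k ! * Real.exp y := by
  have h := Real.sum_le_exp_of_nonneg hy (k + 1)
  have h2 : y ^ k / k ! ≤ Real.exp y :=
    le_trans (Finset.single_le_sum (f := fun i => y ^ i / i !)
      (fun i _ => by positivity) (Finset.self_mem_range_succ k)) h
  have hk : (0:ℝ) < k ! := by positivity
  calc y ^ k = y ^ k / k ! * k ! := by field_simp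
  _ ≤ Real.exp y * k ! := by exact mul_le_mul_of_nonneg_right h2 hk.le
  _ = k ! * Real.exp y := mul_comm _ _

/-- auxiliary constant -/
noncomputable def Kc (k : ℕ) : ℝ := 2 ^ k * (2 + 2 ^ k * k !)

lemma Kc_pos (k : ℕ) : 0 < Kc k := by
  have : (0:ℝ) < k ! := by positivity
  unfold Kc; positivity

lemma abs_add_one_pow_le (k : ℕ) (v : ℝ) :
    (|v| + 1) ^ k ≤ Kc k * Real.exp (v ^ 2 / 2) := by
  have hE : (1:ℝ) ≤ Real.exp (v ^ 2 / 2) := Real.one_le_exp (by positivity)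
  have hA : (0:ℝ) < 2 ^ k := by positivity
  have hB : (0:ℝ) < (k ! : ℝ) := by positivity
  have h1 : (|v| + 1) ^ k ≤ 2 ^ k * (1 + |v| ^ k) := by
    have hle : |v| + 1 ≤ 2 * max |v| 1 := by
      rcases le_total |v| 1 with h | h
      · simp [max_eq_right h]; linarith
      · simp [max_eq_left h]; linarith [abs_nonneg v]
    calc (|v| + 1) ^ k ≤ (2 * max |v| 1) ^ k :=
          pow_le_pow_left₀ (by positivity) hle k
    _ = 2 ^ k * (max |v| 1) ^ k := mul_pow _ _ _
    _ ≤ 2 ^ k * (1 + |v| ^ k) := by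
        gcongr
        rcases le_total |v| 1 with h | h
        · rw [max_eq_right h, one_pow]
          nlinarith [pow_nonneg (abs_nonneg v) k]
        · rw [max_eq_left h]; nlinarith [pow_nonneg (abs_nonneg v) k]
  have h2 : |v| ^ k ≤ 1 + (v ^ 2) ^ k := by
    rcases le_total |v| 1 with h | h
    · have := pow_le_one₀ (abs_nonneg v) h (n := k)
      nlinarith [pow_nonneg (sq_nonneg v) k]
    · have h' : |v| ≤ v ^ 2 := by nlinarith [abs_nonneg v, sq_abs v]
      have := pow_le_pow_left₀ (abs_nonneg v) h' k
      linarith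
  have h3 : (v ^ 2) ^ k ≤ 2 ^ k * k ! * Real.exp (v ^ 2 / 2) := by
    have := pow_le_factorial_mul_exp (y := v ^ 2 / 2) (by positivity) k
    calc (v ^ 2) ^ k = 2 ^ k * (v ^ 2 / 2) ^ k := by
          rw [div_pow]
          field_simp
    _ ≤ 2 ^ k * (k ! * Real.exp (v ^ 2 / 2)) := by gcongr
    _ = 2 ^ k * k ! * Real.exp (v ^ 2 / 2) := by ring
  unfold Kc
  nlinarith [pow_nonneg (abs_nonneg v) k]

lemma integrable_pow_gauss (j : ℕ) {b : ℝ} (hb : 0 < b) :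
    Integrable (fun x : ℝ => x ^ j * Real.exp (-b * x ^ 2)) := by
  have hb2 : 0 < b / 2 := half_pos hb
  refine Integrable.mono' ((integrable_exp_neg_mul_sq hb2).const_mul
      (1 + (2 / b) ^ j * j !)) ?_ ?_
  · exact (Continuous.mul (continuous_pow j)
      ((Real.continuous_exp).comp (by continuity))).aestronglyMeasurable
  · filter_upwards with x
    have hj : |x| ^ j ≤ 1 + (2 / b) ^ j * j ! * Real.exp (b * x ^ 2 / 2) := by
      have h2 : |x| ^ j ≤ 1 + (x ^ 2) ^ j := by
        rcases le_total |x| 1 with h | h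
        · have := pow_le_one₀ (abs_nonneg x) h (n := j)
          nlinarith [pow_nonneg (sq_nonneg x) j]
        · have h' : |x| ≤ x ^ 2 := by nlinarith [abs_nonneg x, sq_abs x]
          have := pow_le_pow_left₀ (abs_nonneg x) h' j
          linarith
      have h3 : (x ^ 2) ^ j ≤ (2 / b) ^ j * j ! * Real.exp (b * x ^ 2 / 2) := by
        have hy := pow_le_factorial_mul_exp (y := b * x ^ 2 / 2) (by positivity) j
        have heq : (x ^ 2) ^ j = (2 / b) ^ j * (b * x ^ 2 / 2) ^ j := by
          rw [← mul_pow]; congr 1; field_simp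
        rw [heq]
        calc (2 / b) ^ j * (b * x ^ 2 / 2) ^ j
            ≤ (2 / b) ^ j * ((j ! : ℝ) * Real.exp (b * x ^ 2 / 2)) := by
              have : (0:ℝ) ≤ (2 / b) ^ j := by positivity
              exact mul_le_mul_of_nonneg_left hy this
        _ = (2 / b) ^ j * j ! * Real.exp (b * x ^ 2 / 2) := by ring
      linarith
    rw [norm_mul, norm_pow, Real.norm_eq_abs, Real.norm_eq_abs, Real.abs_exp]
    calc |x| ^ j * Real.exp (-b * x ^ 2)
        ≤ (1 + (2 / b) ^ j * j ! * Real.exp (b * x ^ 2 / 2)) * Real.exp (-b * x ^ 2) := by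
          exact mul_le_mul_of_nonneg_right hj (Real.exp_nonneg _)
    _ ≤ (1 + (2 / b) ^ j * j !) * Real.exp (-(b / 2) * x ^ 2) := by
          rw [add_mul, add_mul, mul_assoc, ← Real.exp_add]
          have e1 : Real.exp (-b * x ^ 2) ≤ Real.exp (-(b / 2) * x ^ 2) :=
            Real.exp_le_exp.2 (by nlinarith [sq_nonneg x])
          have e2 : Real.exp (b * x ^ 2 / 2 + -b * x ^ 2) = Real.exp (-(b / 2) * x ^ 2) := by
            congr 1; ring
          rw [e2]
          have hc : (0:ℝ) ≤ (2 / b) ^ j * j ! := by positivity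
          nlinarith [Real.exp_nonneg (-(b / 2) * x ^ 2)]

lemma integrable_poly_gauss (k : ℕ) {b : ℝ} (hb : 0 < b) (c : ℝ) :
    Integrable (fun t : ℝ => t ^ k * Real.exp (-b * (t - c) ^ 2)) := by
  have base : ∀ j : ℕ, Integrable (fun t : ℝ => (t - c) ^ j * Real.exp (-b * (t - c) ^ 2)) :=
    fun j => (integrable_pow_gauss j hb).comp_sub_right c
  have : (fun t : ℝ => t ^ k * Real.exp (-b * (t - c) ^ 2)) =
      fun t : ℝ => ∑ j ∈ Finset.range (k + 1),
        (c ^ (k - j) * (k.choose j : ℝ)) * ((t - c) ^ j * Real.exp (-b * (t - c) ^ 2)) := by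
    funext t
    have ht : t = (t - c) + c := by ring
    rw [show t ^ k = ((t - c) + c) ^ k by rw [← ht], add_pow, Finset.sum_mul]
    exact Finset.sum_congr rfl fun j _ => by ring
  rw [this]
  exact integrable_finset_sum _ fun j _ => (base j).const_mul _


lemma exp_key {g ρ t : ℝ} (hg : 0 < g) :
    -t - g * t ^ 2 + ρ * t
      = ((ρ - 1) / (2 * Real.sqrt g)) ^ 2
        - (Real.sqrt g * t - (ρ - 1) / (2 * Real.sqrt g)) ^ 2 := by
  have hs : Real.sqrt g * Real.sqrt g = g := Real.mul_self_sqrt hg.le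
  have hs0 : Real.sqrt g ≠ 0 := by positivity
  have h2a : 2 * Real.sqrt g * ((ρ - 1) / (2 * Real.sqrt g)) = ρ - 1 := by field_simp
  linear_combination (t ^ 2) * hs - t * h2a

lemma sq_affine {g : ℝ} (hg : 0 < g) (a t : ℝ) :
    (Real.sqrt g * t - a) ^ 2 = g * (t - a / Real.sqrt g) ^ 2 := by
  have hs : Real.sqrt g * Real.sqrt g = g := Real.mul_self_sqrt hg.le
  have hs0 : Real.sqrt g ≠ 0 := by positivity
  have hac : Real.sqrt g * (a / Real.sqrt g) = a := by field_simp
  calc (Real.sqrt g * t - a) ^ 2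
      = (Real.sqrt g * t - Real.sqrt g * (a / Real.sqrt g)) ^ 2 := by rw [hac]
  _ = (Real.sqrt g * Real.sqrt g) * (t - a / Real.sqrt g) ^ 2 := by ring
  _ = g * (t - a / Real.sqrt g) ^ 2 := by rw [hs]

lemma F_eq {g ρ : ℝ} (hg : 0 < g) (m : ℕ) :
    F g ρ m = (Real.exp (((ρ - 1) / (2 * Real.sqrt g)) ^ 2) / (Nat.factorial (m - 1))) *
      ∫ t in Set.Ioi (0:ℝ),
        t ^ (m - 1) * Real.exp (-(Real.sqrt g * t - (ρ - 1) / (2 * Real.sqrt g)) ^ 2) := by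
  rw [F, ← MeasureTheory.integral_const_mul]
  refine MeasureTheory.integral_congr_ae (Filter.Eventually.of_forall fun t => ?_)
  have key := exp_key (g := g) (ρ := ρ) (t := t) hg
  have hexp : Real.exp (-t - g * t ^ 2 + ρ * t)
      = Real.exp (((ρ - 1) / (2 * Real.sqrt g)) ^ 2)
        * Real.exp (-(Real.sqrt g * t - (ρ - 1) / (2 * Real.sqrt g)) ^ 2) := by
    rw [key, sub_eq_add_neg, Real.exp_add]
  dsimp only
  rw [hexp]
  ring



lemma sqrt_two_pi_le : Real.sqrt (2 * Real.pi) ≤ 3 := by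
  have h9 : Real.sqrt 9 = 3 := by
    rw [show (9:ℝ) = 3 ^ 2 by norm_num, Real.sqrt_sq (by norm_num : (0:ℝ) ≤ 3)]
  calc Real.sqrt (2 * Real.pi) ≤ Real.sqrt 9 :=
        Real.sqrt_le_sqrt (by nlinarith [Real.pi_le_four])
  _ = 3 := h9

lemma F_le {g ρ : ℝ} (hg : 1 ≤ g) (hα : 1 ≤ (ρ - 1) / (2 * Real.sqrt g)) (k : ℕ) :
    F g ρ (k + 1) ≤ (3 * Kc k / (Nat.factorial k)) * ((ρ - 1) / (2 * Real.sqrt g)) ^ k *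
      Real.exp (((ρ - 1) / (2 * Real.sqrt g)) ^ 2) * ((Real.sqrt g)⁻¹) ^ (k + 1) := by
  have hg0 : 0 < g := lt_of_lt_of_le one_pos hg
  have sg : 0 < Real.sqrt g := Real.sqrt_pos.2 hg0
  set α := (ρ - 1) / (2 * Real.sqrt g) with hαdef
  set c := α / Real.sqrt g with hcdef
  have hα0 : 0 < α := lt_of_lt_of_le one_pos hα
  have Int1 : Integrable (fun t : ℝ => t ^ k * Real.exp (-(Real.sqrt g * t - α) ^ 2)) := by
    have e : (fun t : ℝ => t ^ k * Real.exp (-(Real.sqrt g * t - α) ^ 2))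
        = fun t : ℝ => t ^ k * Real.exp (-g * (t - c) ^ 2) := by
      funext t; rw [sq_affine hg0, neg_mul]
    rw [e]; exact integrable_poly_gauss k hg0 c
  have Int2 : Integrable (fun t : ℝ => Real.exp (-(g / 2) * (t - c) ^ 2)) := by
    simpa using integrable_poly_gauss 0 (by positivity : (0:ℝ) < g / 2) c
  set M : ℝ := ((Real.sqrt g)⁻¹) ^ k * α ^ k * Kc k with hMdef
  have hM0 : 0 ≤ M := by
    have := (Kc_pos k).le
    positivity
  have hpt : ∀ t ∈ Set.Ioi (0:ℝ),
      t ^ k * Real.exp (-(Real.sqrt g * t - α) ^ 2) ≤ M * Real.exp (-(g / 2) * (t - c) ^ 2) := by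
    intro t ht
    have ht0 : 0 < t := ht
    set v := Real.sqrt g * t - α with hvdef
    have hsq : v ^ 2 = g * (t - c) ^ 2 := by rw [hvdef, sq_affine hg0]
    have hva : v + α = Real.sqrt g * t := by rw [hvdef]; ring
    have htv : t = (v + α) * (Real.sqrt g)⁻¹ := by
      field_simp [hva]; linarith
    have step : t ≤ (α * (|v| + 1)) * (Real.sqrt g)⁻¹ := by
      rw [htv]
      have h1 : v + α ≤ α * (|v| + 1) := by
        have := le_abs_self v
        nlinarith [abs_nonneg v]
      gcongr
    have h1 : t ^ k ≤ ((Real.sqrt g)⁻¹) ^ k * α ^ k * (|v| + 1) ^ k := by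
      calc t ^ k ≤ ((α * (|v| + 1)) * (Real.sqrt g)⁻¹) ^ k := pow_le_pow_left₀ ht0.le step k
      _ = ((Real.sqrt g)⁻¹) ^ k * α ^ k * (|v| + 1) ^ k := by
          rw [mul_pow, mul_pow]; ring
    have habs := abs_add_one_pow_le k v
    have hE2 : Real.exp (v ^ 2 / 2) * Real.exp (-v ^ 2) = Real.exp (-(g / 2) * (t - c) ^ 2) := by
      rw [← Real.exp_add]; congr 1; linear_combination (-1/2 : ℝ) * hsq
    calc t ^ k * Real.exp (-v ^ 2)
        ≤ ((Real.sqrt g)⁻¹ ^ k * α ^ k * (|v| + 1) ^ k) * Real.exp (-v ^ 2) :=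
          mul_le_mul_of_nonneg_right h1 (Real.exp_nonneg _)
    _ ≤ ((Real.sqrt g)⁻¹ ^ k * α ^ k * (Kc k * Real.exp (v ^ 2 / 2))) * Real.exp (-v ^ 2) := by
          have hc0 : (0:ℝ) ≤ (Real.sqrt g)⁻¹ ^ k * α ^ k := by positivity
          exact mul_le_mul_of_nonneg_right
            (mul_le_mul_of_nonneg_left habs hc0) (Real.exp_nonneg _)
    _ = M * (Real.exp (v ^ 2 / 2) * Real.exp (-v ^ 2)) := by rw [hMdef]; ring
    _ = M * Real.exp (-(g / 2) * (t - c) ^ 2) := by rw [hE2]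
  have J : (∫ t in Set.Ioi (0:ℝ), Real.exp (-(g / 2) * (t - c) ^ 2)) ≤ 3 * (Real.sqrt g)⁻¹ := by
    calc (∫ t in Set.Ioi (0:ℝ), Real.exp (-(g / 2) * (t - c) ^ 2))
        ≤ ∫ t : ℝ, Real.exp (-(g / 2) * (t - c) ^ 2) :=
          setIntegral_le_integral Int2 (Filter.Eventually.of_forall fun t => Real.exp_nonneg _)
    _ = ∫ u : ℝ, Real.exp (-(g / 2) * u ^ 2) :=
          integral_sub_right_eq_self (fun u : ℝ => Real.exp (-(g / 2) * u ^ 2)) c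
    _ = Real.sqrt (Real.pi / (g / 2)) := integral_gaussian (g / 2)
    _ ≤ 3 * (Real.sqrt g)⁻¹ := by
        rw [show Real.pi / (g / 2) = 2 * Real.pi / g by ring,
          Real.sqrt_div (by positivity) g, div_le_iff₀ sg]
        calc Real.sqrt (2 * Real.pi) ≤ 3 := sqrt_two_pi_le
        _ = 3 * (Real.sqrt g)⁻¹ * Real.sqrt g := by field_simp
  have I1 : (∫ t in Set.Ioi (0:ℝ), t ^ k * Real.exp (-(Real.sqrt g * t - α) ^ 2))
      ≤ M * (3 * (Real.sqrt g)⁻¹) := by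
    calc (∫ t in Set.Ioi (0:ℝ), t ^ k * Real.exp (-(Real.sqrt g * t - α) ^ 2))
        ≤ ∫ t in Set.Ioi (0:ℝ), M * Real.exp (-(g / 2) * (t - c) ^ 2) :=
          setIntegral_mono_on Int1.integrableOn (Int2.const_mul M).integrableOn
            measurableSet_Ioi hpt
    _ = M * ∫ t in Set.Ioi (0:ℝ), Real.exp (-(g / 2) * (t - c) ^ 2) :=
          MeasureTheory.integral_const_mul M _
    _ ≤ M * (3 * (Real.sqrt g)⁻¹) := mul_le_mul_of_nonneg_left J hM0
  rw [F_eq hg0 (k + 1)]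
  simp only [Nat.add_sub_cancel]
  calc Real.exp (α ^ 2) / (Nat.factorial k) *
        ∫ t in Set.Ioi (0:ℝ), t ^ k * Real.exp (-(Real.sqrt g * t - α) ^ 2)
      ≤ Real.exp (α ^ 2) / (Nat.factorial k) * (M * (3 * (Real.sqrt g)⁻¹)) :=
        mul_le_mul_of_nonneg_left I1 (by positivity)
  _ = 3 * Kc k / (Nat.factorial k) * α ^ k * Real.exp (α ^ 2) * (Real.sqrt g)⁻¹ ^ (k + 1) := by
        rw [hMdef, pow_succ]; ring



lemma F_one_ge {g ρ : ℝ} (hg : 1 ≤ g) (hα : 1 ≤ (ρ - 1) / (2 * Real.sqrt g)) :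
    Real.exp (((ρ - 1) / (2 * Real.sqrt g)) ^ 2 - 1) * (Real.sqrt g)⁻¹ ≤ F g ρ 1 := by
  have hg0 : 0 < g := lt_of_lt_of_le one_pos hg
  have sg : 0 < Real.sqrt g := Real.sqrt_pos.2 hg0
  set α := (ρ - 1) / (2 * Real.sqrt g) with hαdef
  set c := α / Real.sqrt g with hcdef
  have hα0 : 0 < α := lt_of_lt_of_le one_pos hα
  have hc0 : 0 < c := by rw [hcdef]; positivity
  have Int2 : Integrable (fun t : ℝ => Real.exp (-(Real.sqrt g * t - α) ^ 2)) := by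
    have e : (fun t : ℝ => Real.exp (-(Real.sqrt g * t - α) ^ 2))
        = fun t : ℝ => Real.exp (-g * (t - c) ^ 2) := by
      funext t; rw [sq_affine hg0, neg_mul]
    rw [e]
    simpa using integrable_poly_gauss 0 hg0 c
  have hsub : Set.Ioc c (c + (Real.sqrt g)⁻¹) ⊆ Set.Ioi (0:ℝ) := fun t ht =>
    lt_trans hc0 ht.1
  have key : Real.exp (-1) * (Real.sqrt g)⁻¹
      ≤ ∫ t in Set.Ioi (0:ℝ), Real.exp (-(Real.sqrt g * t - α) ^ 2) := by
    have step2 : Real.exp (-1) * (Real.sqrt g)⁻¹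
        ≤ ∫ t in Set.Ioc c (c + (Real.sqrt g)⁻¹), Real.exp (-(Real.sqrt g * t - α) ^ 2) := by
      have hμ : (MeasureTheory.volume (Set.Ioc c (c + (Real.sqrt g)⁻¹))).toReal
          = (Real.sqrt g)⁻¹ := by
        rw [Real.volume_Ioc, show c + (Real.sqrt g)⁻¹ - c = (Real.sqrt g)⁻¹ by ring,
          ENNReal.toReal_ofReal (by positivity)]
      have := setIntegral_ge_of_const_le (μ := MeasureTheory.volume)
        (s := Set.Ioc c (c + (Real.sqrt g)⁻¹)) (c := Real.exp (-1))
        measurableSet_Ioc (by simp [Real.volume_Ioc])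
        (fun t ht => ?_) Int2.integrableOn
      · rw [MeasureTheory.measureReal_def, hμ, smul_eq_mul, mul_comm] at this; exact this
      · -- pointwise: exp(-1) ≤ exp(-(√g t - α)^2)
        apply Real.exp_le_exp.2
        have h1 : Real.sqrt g * c = α := by rw [hcdef]; field_simp
        have ht1 : 0 < Real.sqrt g * t - α := by
          have := ht.1
          nlinarith [sg]
        have ht2 : Real.sqrt g * t - α ≤ 1 := by
          have h2 := ht.2
          have : Real.sqrt g * t ≤ Real.sqrt g * (c + (Real.sqrt g)⁻¹) :=
            mul_le_mul_of_nonneg_left h2 sg.le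
          rw [mul_add, h1, mul_inv_cancel₀ sg.ne'] at this
          linarith
        nlinarith
    calc Real.exp (-1) * (Real.sqrt g)⁻¹
        ≤ ∫ t in Set.Ioc c (c + (Real.sqrt g)⁻¹), Real.exp (-(Real.sqrt g * t - α) ^ 2) := step2
    _ ≤ ∫ t in Set.Ioi (0:ℝ), Real.exp (-(Real.sqrt g * t - α) ^ 2) :=
        setIntegral_mono_set Int2.integrableOn
          (Filter.Eventually.of_forall fun t => Real.exp_nonneg _)
          (HasSubset.Subset.eventuallyLE hsub)
  have heq := F_eq (g := g) (ρ := ρ) hg0 1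
  simp only [Nat.sub_self, pow_zero, Nat.factorial_zero, Nat.cast_one, div_one, one_mul] at heq
  rw [heq]
  calc Real.exp (α ^ 2 - 1) * (Real.sqrt g)⁻¹
      = Real.exp (α ^ 2) * (Real.exp (-1) * (Real.sqrt g)⁻¹) := by
        rw [show α ^ 2 - 1 = α ^ 2 + (-1) by ring, Real.exp_add]; ring
  _ ≤ Real.exp (α ^ 2) * ∫ t in Set.Ioi (0:ℝ), Real.exp (-(Real.sqrt g * t - α) ^ 2) :=
        mul_le_mul_of_nonneg_left key (Real.exp_nonneg _)



lemma F_nonneg (g ρ : ℝ) (m : ℕ) : 0 ≤ F g ρ m := by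
  apply setIntegral_nonneg measurableSet_Ioi
  intro t ht
  have ht0 : (0:ℝ) ≤ t := (le_of_lt ht)
  positivity

lemma F_one_pos {g ρ : ℝ} (hg : 1 ≤ g) (hα : 1 ≤ (ρ - 1) / (2 * Real.sqrt g)) :
    0 < F g ρ 1 := by
  have hg0 : 0 < g := lt_of_lt_of_le one_pos hg
  have sg : 0 < Real.sqrt g := Real.sqrt_pos.2 hg0
  exact lt_of_lt_of_le (by positivity) (F_one_ge hg hα)

lemma ratio_tendsto_zero (ρ : ℝ → ℝ)
    (hα : Tendsto (fun g : ℝ => (ρ g - 1) / (2 * Real.sqrt g)) atTop atTop)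
    {m : ℕ} (hm : 2 ≤ m) :
    Tendsto (fun g : ℝ => F g (ρ g) m / (F g (ρ g) 1) ^ m) atTop (𝓝 0) := by
  set k := m - 1 with hkdef
  have hkm : m = k + 1 := (Nat.succ_pred_eq_of_pos (lt_of_lt_of_le two_pos hm)).symm
  set C : ℝ := 3 * Kc k / (Nat.factorial k) * Real.exp m with hCdef
  have hfk : (0:ℝ) < Nat.factorial k := by positivity
  have hC0 : 0 ≤ C := by
    have := (Kc_pos k).le
    rw [hCdef]; positivity
  have hEv : ∀ᶠ g : ℝ in atTop, (1 ≤ g ∧ 1 ≤ (ρ g - 1) / (2 * Real.sqrt g)) :=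
    (eventually_ge_atTop 1).and (hα.eventually_ge_atTop 1)
  have hub : ∀ᶠ g : ℝ in atTop,
      F g (ρ g) m / (F g (ρ g) 1) ^ m
        ≤ C * (((ρ g - 1) / (2 * Real.sqrt g)) ^ k
            * Real.exp (-((ρ g - 1) / (2 * Real.sqrt g)))) := by
    filter_upwards [hEv] with g hg
    obtain ⟨hg1, hA1⟩ := hg
    have hg0 : 0 < g := lt_of_lt_of_le one_pos hg1
    have sg : 0 < Real.sqrt g := Real.sqrt_pos.2 hg0
    set a := (ρ g - 1) / (2 * Real.sqrt g) with hadef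
    have hA0 : 0 < a := lt_of_lt_of_le one_pos hA1
    have hF1 : 0 < F g (ρ g) 1 := F_one_pos hg1 hA1
    rw [div_le_iff₀ (by positivity)]
    have hLB := F_one_ge (g := g) (ρ := ρ g) hg1 hA1
    have hUB := F_le (g := g) (ρ := ρ g) hg1 hA1 k
    rw [← hkm] at hUB
    have hm2 : (2:ℝ) ≤ (m:ℝ) := by exact_mod_cast hm
    have hexp : Real.exp (a ^ 2)
        ≤ Real.exp (m:ℝ) * Real.exp (-a) * Real.exp (a ^ 2 - 1) ^ m := by
      rw [← Real.exp_nat_mul, ← Real.exp_add, ← Real.exp_add]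
      apply Real.exp_le_exp.2
      nlinarith [sq_nonneg a]
    have hLBpow : (Real.exp (a ^ 2 - 1) * (Real.sqrt g)⁻¹) ^ m ≤ (F g (ρ g) 1) ^ m :=
      pow_le_pow_left₀ (by positivity) hLB m
    calc F g (ρ g) m
        ≤ 3 * Kc k / (Nat.factorial k) * a ^ k * Real.exp (a ^ 2)
            * ((Real.sqrt g)⁻¹) ^ m := hUB
    _ ≤ 3 * Kc k / (Nat.factorial k) * a ^ k
          * (Real.exp (m:ℝ) * Real.exp (-a) * Real.exp (a ^ 2 - 1) ^ m)
          * ((Real.sqrt g)⁻¹) ^ m := by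
        have h0 : (0:ℝ) ≤ 3 * Kc k / (Nat.factorial k) * a ^ k := by
          have := (Kc_pos k).le
          positivity
        have h1 := mul_le_mul_of_nonneg_left hexp h0
        calc 3 * Kc k / (Nat.factorial k) * a ^ k * Real.exp (a ^ 2)
              * ((Real.sqrt g)⁻¹) ^ m
            = (3 * Kc k / (Nat.factorial k) * a ^ k * Real.exp (a ^ 2))
              * ((Real.sqrt g)⁻¹) ^ m := by ring
        _ ≤ (3 * Kc k / (Nat.factorial k) * a ^ k
              * (Real.exp (m:ℝ) * Real.exp (-a) * Real.exp (a ^ 2 - 1) ^ m))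
              * ((Real.sqrt g)⁻¹) ^ m := mul_le_mul_of_nonneg_right h1 (by positivity)
    _ = C * (a ^ k * Real.exp (-a))
          * (Real.exp (a ^ 2 - 1) * (Real.sqrt g)⁻¹) ^ m := by
        rw [hCdef, mul_pow]; ring
    _ ≤ C * (a ^ k * Real.exp (-a)) * (F g (ρ g) 1) ^ m := by
        apply mul_le_mul_of_nonneg_left hLBpow
        positivity
  have hlb : ∀ᶠ g : ℝ in atTop, 0 ≤ F g (ρ g) m / (F g (ρ g) 1) ^ m :=
    Filter.Eventually.of_forall fun g =>
      div_nonneg (F_nonneg _ _ _) (pow_nonneg (F_nonneg _ _ _) _)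
  have hB : Tendsto (fun g : ℝ => C * (((ρ g - 1) / (2 * Real.sqrt g)) ^ k
      * Real.exp (-((ρ g - 1) / (2 * Real.sqrt g))))) atTop (𝓝 0) := by
    have h1 : Tendsto (fun x : ℝ => x ^ k * Real.exp (-x)) atTop (𝓝 0) :=
      tendsto_pow_mul_exp_neg_atTop_nhds_zero k
    have := (h1.comp hα).const_mul C
    simpa [Function.comp] using this
  exact squeeze_zero' hlb hub hB

lemma ratio_tendsto_one (ρ : ℝ → ℝ)
    (hα : Tendsto (fun g : ℝ => (ρ g - 1) / (2 * Real.sqrt g)) atTop atTop) :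
    Tendsto (fun g : ℝ => F g (ρ g) 1 / (F g (ρ g) 1) ^ 1) atTop (𝓝 1) := by
  have hEv : ∀ᶠ g : ℝ in atTop, F g (ρ g) 1 / (F g (ρ g) 1) ^ 1 = 1 := by
    filter_upwards [(eventually_ge_atTop (1:ℝ)).and (hα.eventually_ge_atTop 1)] with g hg
    rw [pow_one, div_self (F_one_pos hg.1 hg.2).ne']
  exact Tendsto.congr' (Filter.EventuallyEq.symm hEv) tendsto_const_nhds


/-- if `α(g,ρ(g)) = (ρ(g)-1)/(2√g) → +∞` as `g → ∞`, the
quick-step weights converge to the uniform measure on self-avoiding walks. -/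
theorem quickstep_limit_a_top (d n : ℕ) (hd : 1 ≤ d) (hn : 1 ≤ n)
    (ρ : ℝ → ℝ)
    (hα : Tendsto (fun g : ℝ => (ρ g - 1) / (2 * Real.sqrt g)) atTop atTop)
    (s : Fin n → Fin d × Bool) :
    Tendsto (fun g : ℝ => Qweight d n g (ρ g) s) atTop
      (𝓝 (if SelfAvoiding s then ((csaw d n : ℝ))⁻¹ else 0)) := by
  classical
  -- the normalized product for each walk
  set R : (Fin n → Fin d × Bool) → ℝ → ℝ := fun s' g =>
    ∏ x ∈ walkRange s', (F g (ρ g) (visits s' x) / (F g (ρ g) 1) ^ (visits s' x)) with hRdef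
  -- limit of R for each walk
  have hRlim : ∀ s' : Fin n → Fin d × Bool,
      Tendsto (R s') atTop (𝓝 (if SelfAvoiding s' then 1 else 0)) := by
    intro s'
    have hfac : ∀ x ∈ walkRange s',
        Tendsto (fun g => F g (ρ g) (visits s' x) / (F g (ρ g) 1) ^ (visits s' x)) atTop
          (𝓝 (if visits s' x = 1 then 1 else 0)) := by
      intro x hx
      by_cases h1 : visits s' x = 1
      · rw [if_pos h1, h1]; exact ratio_tendsto_one ρ hα
      · rw [if_neg h1]
        have h2 : 2 ≤ visits s' x :=
          lt_of_le_of_ne (visits_pos s' hx) (Ne.symm h1)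
        exact ratio_tendsto_zero ρ hα h2
    have := tendsto_finset_prod (walkRange s') hfac
    have heq : (∏ x ∈ walkRange s', (if visits s' x = 1 then (1:ℝ) else 0))
        = if SelfAvoiding s' then 1 else 0 := by
      by_cases hsa : SelfAvoiding s'
      · rw [if_pos hsa]
        apply Finset.prod_eq_one
        intro x hx
        rw [if_pos (visits_eq_one hsa hx)]
      · rw [if_neg hsa]
        obtain ⟨x, hx, h2⟩ := exists_two_le_visits hsa
        exact Finset.prod_eq_zero hx (by rw [if_neg (by omega)])
    rw [heq] at this
    exact this
  -- the denominator limit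
  have hden : Tendsto (fun g => ∑ s' : Fin n → Fin d × Bool, R s' g) atTop
      (𝓝 (csaw d n : ℝ)) := by
    have := tendsto_finset_sum Finset.univ (fun s' _ => hRlim s')
    have heq : (∑ s' : Fin n → Fin d × Bool, (if SelfAvoiding s' then (1:ℝ) else 0))
        = (csaw d n : ℝ) := by
      rw [Finset.sum_boole, csaw]
    rw [heq] at this
    exact this
  have hcne : (csaw d n : ℝ) ≠ 0 := by
    exact_mod_cast (csaw_pos d n hd).ne'
  -- the quotient limit
  have hquot : Tendsto (fun g => R s g / ∑ s' : Fin n → Fin d × Bool, R s' g) atTop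
      (𝓝 ((if SelfAvoiding s then (1:ℝ) else 0) / (csaw d n : ℝ))) :=
    (hRlim s).div hden hcne
  -- identify the limit value
  have hval : (if SelfAvoiding s then (1:ℝ) else 0) / (csaw d n : ℝ)
      = (if SelfAvoiding s then ((csaw d n : ℝ))⁻¹ else 0) := by
    split_ifs <;> simp [one_div]
  rw [hval] at hquot
  -- eventual equality of Qweight with the normalized quotient
  have hEv : ∀ᶠ g : ℝ in atTop,
      R s g / (∑ s' : Fin n → Fin d × Bool, R s' g) = Qweight d n g (ρ g) s := by
    filter_upwards [(eventually_ge_atTop (1:ℝ)).and (hα.eventually_ge_atTop 1)] with g hg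
    have hF1 : 0 < F g (ρ g) 1 := F_one_pos hg.1 hg.2
    have hF1n : (F g (ρ g) 1) ^ (n + 1) ≠ 0 := (pow_pos hF1 _).ne'
    have hR : ∀ s' : Fin n → Fin d × Bool,
        R s' g = (∏ x ∈ walkRange s', F g (ρ g) (visits s' x)) / (F g (ρ g) 1) ^ (n + 1) := by
      intro s'
      rw [hRdef]
      dsimp only
      rw [Finset.prod_div_distrib, Finset.prod_pow_eq_pow_sum, sum_visits]
    simp only [hR]
    rw [← Finset.sum_div, Qweight, div_div_div_comm, div_self hF1n, div_one]
  exact hquot.congr' hEv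
end StrongInteraction
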